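/- Let n ≥ 4 and let F be a family of subsets of {1,...,n} containing no three distinct members A, B, C with A ⊂ B and A ⊂ C. Then |F| ≤ C(n, ⌊n/2⌋)·(1 + 2/(n−3)). -/

import Mathlib

open Finset

variable {α : Type*} [Fintype α] [DecidableEq α]

/-- Glue three bijections between pieces of two partitions into a permutation. -/
def glue (P1 P2 Q1 Q2 : Finset α) (hP : Disjoint P1 P2) (hQ : Disjoint Q1 Q2)
    (e1 : ↥P1 ≃ ↥Q1) (e2 : ↥P2 ≃ ↥Q2) (e3 : ↥((P1 ∪ P2)ᶜ) ≃ ↥((Q1 ∪ Q2)ᶜ)) :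
    Equiv.Perm α where
  toFun x :=
    if h : x ∈ P1 then (e1 ⟨x, h⟩ : α)
    else if h2 : x ∈ P2 then (e2 ⟨x, h2⟩ : α)
    else (e3 ⟨x, by simp [Finset.mem_compl, Finset.mem_union, h, h2]⟩ : α)
  invFun y :=
    if h : y ∈ Q1 then (e1.symm ⟨y, h⟩ : α)
    else if h2 : y ∈ Q2 then (e2.symm ⟨y, h2⟩ : α)
    else (e3.symm ⟨y, by simp [Finset.mem_compl, Finset.mem_union, h, h2]⟩ : α)
  left_inv := by
    intro x
    by_cases h : x ∈ P1
    · have hy : ((e1 ⟨x, h⟩ : ↥Q1) : α) ∈ Q1 := (e1 ⟨x, h⟩).2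
      simp [dif_pos h, dif_pos hy]
    · by_cases h2 : x ∈ P2
      · have hy : ((e2 ⟨x, h2⟩ : ↥Q2) : α) ∈ Q2 := (e2 ⟨x, h2⟩).2
        have hy1 : ((e2 ⟨x, h2⟩ : ↥Q2) : α) ∉ Q1 := Finset.disjoint_right.mp hQ hy
        simp [dif_neg h, dif_pos h2, dif_neg hy1, dif_pos hy]
      · have hx3 : x ∈ (P1 ∪ P2)ᶜ := by simp [Finset.mem_compl, Finset.mem_union, h, h2]
        have hy : ((e3 ⟨x, hx3⟩ : ↥((Q1 ∪ Q2)ᶜ)) : α) ∈ (Q1 ∪ Q2)ᶜ := (e3 ⟨x, hx3⟩).2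
        have hy1 : ((e3 ⟨x, hx3⟩ : ↥((Q1 ∪ Q2)ᶜ)) : α) ∉ Q1 := by
          intro hc; simp [Finset.mem_compl, Finset.mem_union] at hy; exact hy.1 hc
        have hy2 : ((e3 ⟨x, hx3⟩ : ↥((Q1 ∪ Q2)ᶜ)) : α) ∉ Q2 := by
          intro hc; simp [Finset.mem_compl, Finset.mem_union] at hy; exact hy.2 hc
        simp [dif_neg h, dif_neg h2, dif_neg hy1, dif_neg hy2]
  right_inv := by
    intro y
    by_cases h : y ∈ Q1
    · have hx : ((e1.symm ⟨y, h⟩ : ↥P1) : α) ∈ P1 := (e1.symm ⟨y, h⟩).2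
      simp [dif_pos h, dif_pos hx]
    · by_cases h2 : y ∈ Q2
      · have hx : ((e2.symm ⟨y, h2⟩ : ↥P2) : α) ∈ P2 := (e2.symm ⟨y, h2⟩).2
        have hx1 : ((e2.symm ⟨y, h2⟩ : ↥P2) : α) ∉ P1 := Finset.disjoint_right.mp hP hx
        simp [dif_neg h, dif_pos h2, dif_neg hx1, dif_pos hx]
      · have hy3 : y ∈ (Q1 ∪ Q2)ᶜ := by simp [Finset.mem_compl, Finset.mem_union, h, h2]
        have hx : ((e3.symm ⟨y, hy3⟩ : ↥((P1 ∪ P2)ᶜ)) : α) ∈ (P1 ∪ P2)ᶜ :=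
          (e3.symm ⟨y, hy3⟩).2
        have hx1 : ((e3.symm ⟨y, hy3⟩ : ↥((P1 ∪ P2)ᶜ)) : α) ∉ P1 := by
          intro hc; simp [Finset.mem_compl, Finset.mem_union] at hx; exact hx.1 hc
        have hx2 : ((e3.symm ⟨y, hy3⟩ : ↥((P1 ∪ P2)ᶜ)) : α) ∉ P2 := by
          intro hc; simp [Finset.mem_compl, Finset.mem_union] at hx; exact hx.2 hc
        simp [dif_neg h, dif_neg h2, dif_neg hx1, dif_neg hx2]

lemma glue_apply_mem1 (P1 P2 Q1 Q2 : Finset α) (hP : Disjoint P1 P2) (hQ : Disjoint Q1 Q2)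
    (e1 : ↥P1 ≃ ↥Q1) (e2 : ↥P2 ≃ ↥Q2) (e3 : ↥((P1 ∪ P2)ᶜ) ≃ ↥((Q1 ∪ Q2)ᶜ))
    {x : α} (h : x ∈ P1) : glue P1 P2 Q1 Q2 hP hQ e1 e2 e3 x = (e1 ⟨x, h⟩ : α) := by
  simp [glue, dif_pos h]

lemma glue_apply_mem2 (P1 P2 Q1 Q2 : Finset α) (hP : Disjoint P1 P2) (hQ : Disjoint Q1 Q2)
    (e1 : ↥P1 ≃ ↥Q1) (e2 : ↥P2 ≃ ↥Q2) (e3 : ↥((P1 ∪ P2)ᶜ) ≃ ↥((Q1 ∪ Q2)ᶜ))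
    {x : α} (h2 : x ∈ P2) : glue P1 P2 Q1 Q2 hP hQ e1 e2 e3 x = (e2 ⟨x, h2⟩ : α) := by
  have h : x ∉ P1 := Finset.disjoint_right.mp hP h2
  simp [glue, dif_neg h, dif_pos h2]

lemma glue_image1 (P1 P2 Q1 Q2 : Finset α) (hP : Disjoint P1 P2) (hQ : Disjoint Q1 Q2)
    (h1 : P1.card = Q1.card)
    (e1 : ↥P1 ≃ ↥Q1) (e2 : ↥P2 ≃ ↥Q2) (e3 : ↥((P1 ∪ P2)ᶜ) ≃ ↥((Q1 ∪ Q2)ᶜ)) :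
    P1.image (glue P1 P2 Q1 Q2 hP hQ e1 e2 e3) = Q1 := by
  apply Finset.eq_of_subset_of_card_le
  · intro y hy
    obtain ⟨x, hx, rfl⟩ := Finset.mem_image.mp hy
    rw [glue_apply_mem1 (h := hx)]
    exact (e1 ⟨x, hx⟩).2
  · rw [Finset.card_image_of_injective _ (glue P1 P2 Q1 Q2 hP hQ e1 e2 e3).injective, h1]

lemma glue_image2 (P1 P2 Q1 Q2 : Finset α) (hP : Disjoint P1 P2) (hQ : Disjoint Q1 Q2)
    (h2 : P2.card = Q2.card)
    (e1 : ↥P1 ≃ ↥Q1) (e2 : ↥P2 ≃ ↥Q2) (e3 : ↥((P1 ∪ P2)ᶜ) ≃ ↥((Q1 ∪ Q2)ᶜ)) :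
    P2.image (glue P1 P2 Q1 Q2 hP hQ e1 e2 e3) = Q2 := by
  apply Finset.eq_of_subset_of_card_le
  · intro y hy
    obtain ⟨x, hx, rfl⟩ := Finset.mem_image.mp hy
    rw [glue_apply_mem2 (h2 := hx)]
    exact (e2 ⟨x, hx⟩).2
  · rw [Finset.card_image_of_injective _ (glue P1 P2 Q1 Q2 hP hQ e1 e2 e3).injective, h2]

/-- Restrict a permutation mapping `P` onto `Q` to an equivalence of subtypes. -/
def restr (σ : Equiv.Perm α) (P Q : Finset α) (hσ : P.image σ = Q) : ↥P ≃ ↥Q where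
  toFun x := ⟨σ x, by rw [← hσ]; exact Finset.mem_image_of_mem _ x.2⟩
  invFun y := ⟨σ.symm y, by
    have hy : (y : α) ∈ P.image ⇑σ := by rw [hσ]; exact y.2
    obtain ⟨x, hx, hxy⟩ := Finset.mem_image.mp hy
    rw [← hxy]; simpa using hx⟩
  left_inv x := by simp
  right_inv y := by simp

theorem card_perm_filter (P1 P2 Q1 Q2 : Finset α) (hP : Disjoint P1 P2) (hQ : Disjoint Q1 Q2)
    (h1 : P1.card = Q1.card) (h2 : P2.card = Q2.card) :
    (Finset.univ.filter fun σ : Equiv.Perm α => P1.image ⇑σ = Q1 ∧ P2.image ⇑σ = Q2).card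
      = P1.card.factorial * P2.card.factorial
        * (Fintype.card α - (P1 ∪ P2).card).factorial := by
  classical
  have hc3 : ((P1 ∪ P2)ᶜ : Finset α).card = ((Q1 ∪ Q2)ᶜ : Finset α).card := by
    rw [Finset.card_compl, Finset.card_compl, Finset.card_union_of_disjoint hP,
      Finset.card_union_of_disjoint hQ, h1, h2]
  set Ψ : ((↥P1 ≃ ↥Q1) × (↥P2 ≃ ↥Q2) × (↥((P1 ∪ P2)ᶜ) ≃ ↥((Q1 ∪ Q2)ᶜ))) →
      {σ : Equiv.Perm α // P1.image ⇑σ = Q1 ∧ P2.image ⇑σ = Q2} :=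
    fun t => ⟨glue P1 P2 Q1 Q2 hP hQ t.1 t.2.1 t.2.2,
      glue_image1 P1 P2 Q1 Q2 hP hQ h1 t.1 t.2.1 t.2.2,
      glue_image2 P1 P2 Q1 Q2 hP hQ h2 t.1 t.2.1 t.2.2⟩ with hΨdef
  have hbij : Function.Bijective Ψ := by
    constructor
    · rintro ⟨a1, a2, a3⟩ ⟨b1, b2, b3⟩ hab
      have hab' : glue P1 P2 Q1 Q2 hP hQ a1 a2 a3 = glue P1 P2 Q1 Q2 hP hQ b1 b2 b3 := by
        simpa [hΨdef, Subtype.ext_iff] using hab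
      have heval : ∀ x : α, glue P1 P2 Q1 Q2 hP hQ a1 a2 a3 x
          = glue P1 P2 Q1 Q2 hP hQ b1 b2 b3 x := fun x => by rw [hab']
      refine Prod.ext ?_ (Prod.ext ?_ ?_)
      · ext x
        have := heval x
        rw [glue_apply_mem1 (h := x.2), glue_apply_mem1 (h := x.2)] at this
        simpa using this
      · ext x
        have := heval x
        rw [glue_apply_mem2 (h2 := x.2), glue_apply_mem2 (h2 := x.2)] at this
        simpa using this
      · ext x
        have hx1 : (x : α) ∉ P1 := by
          have := x.2; simp [Finset.mem_compl, Finset.mem_union] at this; exact this.1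
        have hx2 : (x : α) ∉ P2 := by
          have := x.2; simp [Finset.mem_compl, Finset.mem_union] at this; exact this.2
        have := heval x
        simp only [glue, Equiv.coe_fn_mk, dif_neg hx1, dif_neg hx2] at this
        simpa using this
    · rintro ⟨σ, hσ1, hσ2⟩
      have hσ3 : ((P1 ∪ P2)ᶜ : Finset α).image ⇑σ = (Q1 ∪ Q2)ᶜ := by
        have himg : (P1 ∪ P2).image ⇑σ = Q1 ∪ Q2 := by
          rw [Finset.image_union, hσ1, hσ2]
        have : ((P1 ∪ P2)ᶜ : Finset α) = univ \ (P1 ∪ P2) := by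
          simp [Finset.compl_eq_univ_sdiff]
        rw [this, Finset.image_sdiff _ _ σ.injective, himg,
          Finset.image_univ_equiv, Finset.compl_eq_univ_sdiff]
      refine ⟨⟨restr σ P1 Q1 hσ1, restr σ P2 Q2 hσ2, restr σ _ _ hσ3⟩, ?_⟩
      apply Subtype.ext
      apply Equiv.ext
      intro x
      by_cases h : x ∈ P1
      · rw [hΨdef]; simp only []
        rw [glue_apply_mem1 (h := h)]; rfl
      · by_cases h2 : x ∈ P2
        · rw [hΨdef]; simp only []
          rw [glue_apply_mem2 (h2 := h2)]; rfl
        · rw [hΨdef]; simp only []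
          simp only [glue, Equiv.coe_fn_mk, dif_neg h, dif_neg h2]; rfl
  rw [← Fintype.card_subtype, ← Fintype.card_of_bijective hbij]
  rw [Fintype.card_prod, Fintype.card_prod]
  rw [Fintype.card_equiv (Fintype.equivOfCardEq
      (by rw [Fintype.card_coe, Fintype.card_coe]; exact h1)),
    Fintype.card_equiv (Fintype.equivOfCardEq
      (by rw [Fintype.card_coe, Fintype.card_coe]; exact h2)),
    Fintype.card_equiv (Fintype.equivOfCardEq
      (by rw [Fintype.card_coe, Fintype.card_coe]; exact hc3))]
  rw [Fintype.card_coe, Fintype.card_coe, Fintype.card_coe, Finset.card_compl, mul_assoc]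

/-- The initial interval of `Fin n` of length `k`. -/
def Iv (n k : ℕ) : Finset (Fin n) := Finset.univ.filter fun i => (i : ℕ) < k

lemma mem_Iv {n k : ℕ} {i : Fin n} : i ∈ Iv n k ↔ (i : ℕ) < k := by simp [Iv]

lemma card_Iv {n k : ℕ} (h : k ≤ n) : (Iv n k).card = k := by
  have : Iv n k = Finset.attachFin (Finset.range k)
      (fun m hm => lt_of_lt_of_le (Finset.mem_range.mp hm) h) := by
    ext i; simp [Iv, Finset.mem_attachFin]
  rw [this, Finset.card_attachFin, Finset.card_range]

lemma Iv_mono {n a b : ℕ} (h : a ≤ b) : Iv n a ⊆ Iv n b := fun i hi => by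
  rw [mem_Iv] at *; omega

/-- `S` is an initial segment of the permutation `σ`. -/
abbrev Init {n : ℕ} (σ : Equiv.Perm (Fin n)) (S : Finset (Fin n)) : Prop :=
  (Iv n S.card).image ⇑σ = S

lemma count_pair {n : ℕ} (A B : Finset (Fin n)) (hAB : A ⊆ B) :
    (Finset.univ.filter fun σ : Equiv.Perm (Fin n) => Init σ A ∧ Init σ B).card
      = A.card.factorial * (B.card - A.card).factorial * (n - B.card).factorial := by
  have hb : B.card ≤ n := by simpa using Finset.card_le_univ B
  have ha : A.card ≤ B.card := Finset.card_le_card hAB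
  have hIv : Iv n A.card ⊆ Iv n B.card := Iv_mono ha
  have key : ∀ σ : Equiv.Perm (Fin n), (Init σ A ∧ Init σ B) ↔
      ((Iv n A.card).image ⇑σ = A ∧ ((Iv n B.card) \ (Iv n A.card)).image ⇑σ = B \ A) := by
    intro σ
    constructor
    · rintro ⟨h1, h2⟩
      exact ⟨h1, by rw [Finset.image_sdiff _ _ σ.injective, h1, h2]⟩
    · rintro ⟨h1, h2⟩
      refine ⟨h1, ?_⟩
      have hu : Iv n B.card = Iv n A.card ∪ (Iv n B.card \ Iv n A.card) :=
        (Finset.union_sdiff_of_subset hIv).symm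
      rw [Init, hu, Finset.image_union, h1, h2, Finset.union_sdiff_of_subset hAB]
  rw [Finset.filter_congr (fun σ _ => key σ)]
  rw [card_perm_filter _ _ _ _ Finset.disjoint_sdiff Finset.disjoint_sdiff
    (by rw [card_Iv (le_trans ha hb)]) (by
      rw [Finset.card_sdiff_of_subset hIv, Finset.card_sdiff_of_subset hAB, card_Iv hb, card_Iv (le_trans ha hb)])]
  rw [Finset.union_sdiff_of_subset hIv, Fintype.card_fin, card_Iv (le_trans ha hb),
    Finset.card_sdiff_of_subset hIv, card_Iv hb, card_Iv (le_trans ha hb)]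

lemma count_single {n : ℕ} (S : Finset (Fin n)) :
    (Finset.univ.filter fun σ : Equiv.Perm (Fin n) => Init σ S).card
      = S.card.factorial * (n - S.card).factorial := by
  have h := count_pair S S (subset_refl S)
  simp only [and_self, Nat.sub_self, Nat.factorial_zero, mul_one] at h
  exact h

lemma init_comparable {n : ℕ} {σ : Equiv.Perm (Fin n)} {S T : Finset (Fin n)}
    (hS : Init σ S) (hT : Init σ T) : S ⊆ T ∨ T ⊆ S := by
  rcases le_total S.card T.card with hc | hc
  · left; rw [← hS, ← hT]; exact Finset.image_subset_image (Iv_mono hc)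
  · right; rw [← hS, ← hT]; exact Finset.image_subset_image (Iv_mono hc)

lemma lym_nat {n : ℕ} (𝒜 : Finset (Finset (Fin n)))
    (h𝒜 : IsAntichain (· ⊆ ·) (𝒜 : Set (Finset (Fin n)))) :
    ∑ A ∈ 𝒜, A.card.factorial * (n - A.card).factorial ≤ n.factorial := by
  have key := Finset.sum_card_slice_div_choose_le_one (𝕜 := ℚ) h𝒜
  rw [Fintype.card_fin] at key
  have hcards : ∀ A ∈ 𝒜, A.card ∈ Finset.range (n + 1) := fun A _ => by
    have : A.card ≤ n := by simpa using Finset.card_le_univ A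
    simp; omega
  have expand : (∑ A ∈ 𝒜, ((A.card.factorial * (n - A.card).factorial : ℕ) : ℚ))
      = ∑ r ∈ Finset.range (n + 1), ((𝒜 # r).card : ℚ)
          * ((r.factorial * (n - r).factorial : ℕ) : ℚ) := by
    rw [← Finset.sum_fiberwise_of_maps_to hcards]
    refine Finset.sum_congr rfl fun r _ => ?_
    have : ∀ A ∈ 𝒜.filter (fun A => A.card = r),
        ((A.card.factorial * (n - A.card).factorial : ℕ) : ℚ)
          = ((r.factorial * (n - r).factorial : ℕ) : ℚ) := by
      intro A hA
      rw [(Finset.mem_filter.mp hA).2]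
    rw [Finset.sum_congr rfl this, Finset.sum_const, nsmul_eq_mul]
    rfl
  have hfact : ∀ r ∈ Finset.range (n + 1),
      ((r.factorial * (n - r).factorial : ℕ) : ℚ) = (n.factorial : ℚ) / (n.choose r : ℚ) := by
    intro r hr
    have hrn : r ≤ n := by simp at hr; omega
    have hne : (n.choose r : ℚ) ≠ 0 := by
      exact_mod_cast (Nat.choose_pos hrn).ne'
    rw [eq_div_iff hne]
    have := Nat.choose_mul_factorial_mul_factorial hrn
    push_cast [← this]
    ring
  calc (∑ A ∈ 𝒜, (A.card.factorial * (n - A.card).factorial) : ℕ)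
      = ∑ A ∈ 𝒜, A.card.factorial * (n - A.card).factorial := rfl
    _ ≤ n.factorial := by
        have : (∑ A ∈ 𝒜, ((A.card.factorial * (n - A.card).factorial : ℕ) : ℚ))
            ≤ (n.factorial : ℚ) := by
          rw [expand]
          calc ∑ r ∈ Finset.range (n + 1), ((𝒜 # r).card : ℚ)
                * ((r.factorial * (n - r).factorial : ℕ) : ℚ)
              = ∑ r ∈ Finset.range (n + 1),
                  (n.factorial : ℚ) * (((𝒜 # r).card : ℚ) / (n.choose r : ℚ)) := by
                refine Finset.sum_congr rfl fun r hr => ?_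
                rw [hfact r hr]; ring
            _ = (n.factorial : ℚ) * ∑ r ∈ Finset.range (n + 1),
                  (((𝒜 # r).card : ℚ) / (n.choose r : ℚ)) := by rw [Finset.mul_sum]
            _ ≤ (n.factorial : ℚ) * 1 := by
                refine mul_le_mul_of_nonneg_left key (by positivity)
            _ = (n.factorial : ℚ) := mul_one _
        exact_mod_cast (by push_cast at this ⊢; exact this : 
          ((∑ A ∈ 𝒜, A.card.factorial * (n - A.card).factorial : ℕ) : ℚ) ≤ (n.factorial : ℚ))

lemma le_choose_of {m k : ℕ} (h1 : 1 ≤ k) (h2 : k < m) : m ≤ m.choose k := by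
  induction m generalizing k with
  | zero => omega
  | succ m ih =>
    match k, h1 with
    | 1, _ =>
      rw [Nat.choose_one_right]
    | (j + 2), _ =>
      rcases eq_or_lt_of_le (Nat.lt_succ_iff.mp h2) with heq | hlt
      · rw [heq, Nat.choose_succ_self_right]
      · have hih := ih (k := j + 2) (by omega) hlt
        have hpos : 0 < m.choose (j + 1) := Nat.choose_pos (by omega)
        rw [Nat.choose_succ_succ]
        have hconv : m.choose (j + 1).succ = m.choose (j + 2) := by norm_num
        omega

lemma key_binom {n m : ℕ} (hn : 4 ≤ n) (hm2 : 2 ≤ m) (hmn : m ≤ n) :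
    (n - 3) * n.choose m ≤ 2 * m * n.choose (n / 2) := by
  by_cases hcase : n - 3 ≤ 2 * m
  · calc (n - 3) * n.choose m ≤ 2 * m * n.choose m :=
        Nat.mul_le_mul_right _ hcase
      _ ≤ 2 * m * n.choose (n / 2) := Nat.mul_le_mul_left _ (Nat.choose_le_middle m n)
  · push_neg at hcase
    have hmn4 : 2 * m + 4 ≤ n := by omega
    have hid : n.choose (m + 1) * (m + 1) = n.choose m * (n - m) :=
      Nat.choose_succ_right_eq n m
    have harith : (n - 3) * (m + 1) ≤ 2 * m * (n - m) := by
      obtain ⟨f, hf⟩ : ∃ f, n = 2 * m + f + 4 := ⟨n - (2 * m + 4), by omega⟩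
      have h3 : n - 3 = 2 * m + f + 1 := by omega
      have h4 : n - m = m + f + 4 := by omega
      rw [h3, h4]; nlinarith
    have step : (n - 3) * n.choose m * (m + 1) ≤ 2 * m * n.choose (m + 1) * (m + 1) := by
      calc (n - 3) * n.choose m * (m + 1) = (n - 3) * (m + 1) * n.choose m := by ring
        _ ≤ 2 * m * (n - m) * n.choose m := Nat.mul_le_mul_right _ harith
        _ = 2 * m * (n.choose m * (n - m)) := by ring
        _ = 2 * m * (n.choose (m + 1) * (m + 1)) := by rw [hid]
        _ = 2 * m * n.choose (m + 1) * (m + 1) := by ring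
    have step2 : (n - 3) * n.choose m ≤ 2 * m * n.choose (m + 1) :=
      Nat.le_of_mul_le_mul_right step (by omega)
    calc (n - 3) * n.choose m ≤ 2 * m * n.choose (m + 1) := step2
      _ ≤ 2 * m * n.choose (n / 2) := Nat.mul_le_mul_left _ (Nat.choose_le_middle (m + 1) n)

theorem stmt_7 (n : ℕ) (hn : 4 ≤ n) (F : Finset (Finset (Fin n)))
    (h : ∀ A ∈ F, ∀ B ∈ F, ∀ C ∈ F,
      A ≠ B → A ≠ C → B ≠ C → ¬ (A ⊂ B ∧ A ⊂ C)) :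
    (F.card : ℚ) ≤ (n.choose (n / 2) : ℚ) * (1 + 2 / ((n : ℚ) - 3)) := by
  classical
  set C := n.choose (n / 2) with hC
  set P : Finset (Finset (Fin n) × Finset (Fin n)) :=
    (F ×ˢ F).filter (fun p => p.1 ⊂ p.2) with hPdef
  have hmemP : ∀ {p : Finset (Fin n) × Finset (Fin n)},
      p ∈ P → p.1 ∈ F ∧ p.2 ∈ F ∧ p.1 ⊂ p.2 := by
    intro p hp
    rw [hPdef, Finset.mem_filter, Finset.mem_product] at hp
    exact ⟨hp.1.1, hp.1.2, hp.2⟩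
  set e : Finset (Fin n) × Finset (Fin n) → ℕ :=
    fun p => n.choose p.1.card + n.choose p.2.card - C with hedef
  set cnt : Finset (Fin n) × Finset (Fin n) → ℕ :=
    fun p => p.1.card.factorial * (p.2.card - p.1.card).factorial
      * (n - p.2.card).factorial with hcntdef
  -- per-permutation inequality
  have key1 : ∀ σ : Equiv.Perm (Fin n),
      (∑ S ∈ F.filter (fun S => Init σ S), n.choose S.card)
        ≤ C + ∑ p ∈ P, (if Init σ p.1 ∧ Init σ p.2 then e p else 0) := by
    intro σ
    set G := F.filter (fun S => Init σ S) with hG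
    have hGcard : G.card ≤ 2 := by
      by_contra hc
      push_neg at hc
      obtain ⟨X, Y, Z, hX, hY, hZ, hXY, hXZ, hYZ⟩ := Finset.two_lt_card_iff.mp hc
      rw [hG, Finset.mem_filter] at hX hY hZ
      have ssub : ∀ {U V : Finset (Fin n)}, U ⊆ V → U ≠ V → U ⊂ V :=
        fun hs hne => Finset.ssubset_iff_subset_ne.mpr ⟨hs, hne⟩
      rcases init_comparable hX.2 hY.2 with hxy | hyx
      · rcases init_comparable hX.2 hZ.2 with hxz | hzx
        · exact h X hX.1 Y hY.1 Z hZ.1 hXY hXZ hYZ ⟨ssub hxy hXY, ssub hxz hXZ⟩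
        · exact h Z hZ.1 X hX.1 Y hY.1 (Ne.symm hXZ) (Ne.symm hYZ) hXY
            ⟨ssub hzx (Ne.symm hXZ), ssub (hzx.trans hxy) (Ne.symm hYZ)⟩
      · rcases init_comparable hX.2 hZ.2 with hxz | hzx
        · exact h Y hY.1 X hX.1 Z hZ.1 (Ne.symm hXY) hYZ hXZ
            ⟨ssub hyx (Ne.symm hXY), ssub (hyx.trans hxz) hYZ⟩
        · rcases init_comparable hY.2 hZ.2 with hyz | hzy
          · exact h Y hY.1 Z hZ.1 X hX.1 hYZ (Ne.symm hXY) (Ne.symm hXZ)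
              ⟨ssub hyz hYZ, ssub hyx (Ne.symm hXY)⟩
          · exact h Z hZ.1 Y hY.1 X hX.1 (Ne.symm hYZ) (Ne.symm hXZ) (Ne.symm hXY)
              ⟨ssub hzy (Ne.symm hYZ), ssub hzx (Ne.symm hXZ)⟩
    rcases (show G.card = 0 ∨ G.card = 1 ∨ G.card = 2 by omega) with h0 | h1 | h2
    · rw [Finset.card_eq_zero.mp h0, Finset.sum_empty]
      exact Nat.zero_le _
    · obtain ⟨S, hS⟩ := Finset.card_eq_one.mp h1
      rw [hS, Finset.sum_singleton]
      exact le_trans (Nat.choose_le_middle _ n) (Nat.le_add_right _ _)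
    · obtain ⟨X, Y, hXY, hG2⟩ := Finset.card_eq_two.mp h2
      have hXG : X ∈ G := by rw [hG2]; exact Finset.mem_insert_self _ _
      have hYG : Y ∈ G := by rw [hG2]; simp
      rw [hG, Finset.mem_filter] at hXG hYG
      have hcase : ∀ U V : Finset (Fin n), U ∈ F → V ∈ F → Init σ U → Init σ V → U ⊂ V →
          n.choose U.card + n.choose V.card
            ≤ C + ∑ p ∈ P, (if Init σ p.1 ∧ Init σ p.2 then e p else 0) := by
        intro U V hU hV iU iV hUV
        have hq : (U, V) ∈ P := by
          rw [hPdef, Finset.mem_filter, Finset.mem_product]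
          exact ⟨⟨hU, hV⟩, hUV⟩
        have hsingle : e (U, V) ≤ ∑ p ∈ P, (if Init σ p.1 ∧ Init σ p.2 then e p else 0) := by
          have hle := Finset.single_le_sum
            (f := fun p => if Init σ p.1 ∧ Init σ p.2 then e p else 0)
            (fun p _ => Nat.zero_le _) hq
          have hite : (if Init σ (U, V).1 ∧ Init σ (U, V).2 then e (U, V) else 0) = e (U, V) :=
            if_pos (⟨iU, iV⟩ : Init σ (U, V).1 ∧ Init σ (U, V).2)
          exact le_trans (le_of_eq hite.symm) hle
        have hUC : n.choose U.card ≤ C := Nat.choose_le_middle _ n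
        have hee : e (U, V) = n.choose U.card + n.choose V.card - C := rfl
        have : n.choose U.card + n.choose V.card ≤ C + e (U, V) := by
          rw [hee]; omega
        exact le_trans this (Nat.add_le_add_left hsingle C)
      rw [hG2, Finset.sum_pair hXY]
      rcases init_comparable hXG.2 hYG.2 with hsub | hsub
      · exact hcase X Y hXG.1 hYG.1 hXG.2 hYG.2
          (Finset.ssubset_iff_subset_ne.mpr ⟨hsub, hXY⟩)
      · rw [add_comm]
        exact hcase Y X hYG.1 hXG.1 hYG.2 hXG.2
          (Finset.ssubset_iff_subset_ne.mpr ⟨hsub, Ne.symm hXY⟩)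
  -- total of left-hand sides
  have sum1 : ∑ σ ∈ (Finset.univ : Finset (Equiv.Perm (Fin n))),
      (∑ S ∈ F.filter (fun S => Init σ S), n.choose S.card) = F.card * n.factorial := by
    calc ∑ σ ∈ (Finset.univ : Finset (Equiv.Perm (Fin n))),
        (∑ S ∈ F.filter (fun S => Init σ S), n.choose S.card)
        = ∑ σ ∈ (Finset.univ : Finset (Equiv.Perm (Fin n))),
            ∑ S ∈ F, (if Init σ S then n.choose S.card else 0) := by
          exact Finset.sum_congr rfl fun σ _ => Finset.sum_filter _ _
      _ = ∑ S ∈ F, ∑ σ ∈ (Finset.univ : Finset (Equiv.Perm (Fin n))),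
            (if Init σ S then n.choose S.card else 0) := Finset.sum_comm
      _ = ∑ S ∈ F, n.factorial := by
          refine Finset.sum_congr rfl fun S hS => ?_
          have hs : S.card ≤ n := by simpa using Finset.card_le_univ S
          rw [← Finset.sum_filter, Finset.sum_const, count_single, smul_eq_mul]
          have hm := Nat.choose_mul_factorial_mul_factorial hs
          calc S.card.factorial * (n - S.card).factorial * n.choose S.card
              = n.choose S.card * S.card.factorial * (n - S.card).factorial := by ring
            _ = n.factorial := hm
      _ = F.card * n.factorial := by rw [Finset.sum_const, smul_eq_mul]
  -- total of right-hand sides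
  have sum2 : ∑ σ ∈ (Finset.univ : Finset (Equiv.Perm (Fin n))),
      (C + ∑ p ∈ P, (if Init σ p.1 ∧ Init σ p.2 then e p else 0))
      = n.factorial * C + ∑ p ∈ P, e p * cnt p := by
    rw [Finset.sum_add_distrib, Finset.sum_const, Finset.card_univ, Fintype.card_perm,
      Fintype.card_fin, smul_eq_mul]
    congr 1
    calc ∑ σ ∈ (Finset.univ : Finset (Equiv.Perm (Fin n))),
        ∑ p ∈ P, (if Init σ p.1 ∧ Init σ p.2 then e p else 0)
        = ∑ p ∈ P, ∑ σ ∈ (Finset.univ : Finset (Equiv.Perm (Fin n))),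
            (if Init σ p.1 ∧ Init σ p.2 then e p else 0) := Finset.sum_comm
      _ = ∑ p ∈ P, e p * cnt p := by
          refine Finset.sum_congr rfl fun p hp => ?_
          obtain ⟨hp1, hp2, hp3⟩ := hmemP hp
          rw [← Finset.sum_filter, Finset.sum_const, smul_eq_mul,
            count_pair p.1 p.2 hp3.subset, hcntdef]
          exact mul_comm _ _
  have main1 : F.card * n.factorial ≤ n.factorial * C + ∑ p ∈ P, e p * cnt p := by
    rw [← sum1, ← sum2]
    exact Finset.sum_le_sum fun σ _ => key1 σ
  -- per-pair estimate
  have perpair : ∀ p ∈ P, (n - 3) * (e p * cnt p)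
      ≤ 2 * C * (p.1.card.factorial * (n - p.1.card).factorial) := by
    intro p hp
    obtain ⟨hp1, hp2, hp3⟩ := hmemP hp
    have hab : p.1.card < p.2.card := Finset.card_lt_card hp3
    have hbn : p.2.card ≤ n := by simpa using Finset.card_le_univ p.2
    have hCn : n ≤ C := by
      have := Nat.choose_le_middle 1 n
      rwa [Nat.choose_one_right] at this
    have hee : e p = n.choose p.1.card + n.choose p.2.card - C := rfl
    have hcc : cnt p = p.1.card.factorial * (p.2.card - p.1.card).factorial
        * (n - p.2.card).factorial := rfl
    rcases eq_or_lt_of_le hbn with hb | hb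
    · -- p.2.card = n
      have he : e p ≤ 1 := by
        have h2 : n.choose p.1.card ≤ C := Nat.choose_le_middle _ n
        rw [hee, hb, Nat.choose_self]
        omega
      calc (n - 3) * (e p * cnt p) ≤ (n - 3) * (1 * cnt p) := by gcongr
        _ = (n - 3) * cnt p := by ring
        _ = (n - 3) * (p.1.card.factorial * (n - p.1.card).factorial) := by
            rw [hcc, hb, Nat.sub_self, Nat.factorial_zero, mul_one]
        _ ≤ 2 * C * (p.1.card.factorial * (n - p.1.card).factorial) := by
            have : n - 3 ≤ 2 * C := by omega
            exact Nat.mul_le_mul_right _ this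
    · -- p.2.card < n
      have he : e p ≤ n.choose p.1.card := by
        have h2 : n.choose p.2.card ≤ C := Nat.choose_le_middle _ n
        rw [hee]; omega
      have hge : n - p.1.card ≤ (n - p.1.card).choose (p.2.card - p.1.card) :=
        le_choose_of (by omega) (by omega)
      have hsymm : n.choose (n - p.1.card) = n.choose p.1.card :=
        Nat.choose_symm (by omega)
      have hkb : (n - 3) * n.choose p.1.card ≤ 2 * C * (n - p.1.card) := by
        have hk := key_binom (n := n) (m := n - p.1.card) hn (by omega) (by omega)
        rw [hsymm] at hk
        calc (n - 3) * n.choose p.1.card ≤ 2 * (n - p.1.card) * C := hk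
          _ = 2 * C * (n - p.1.card) := by ring
      have hchain : (n - 3) * n.choose p.1.card
          ≤ 2 * C * ((n - p.1.card).choose (p.2.card - p.1.card)) :=
        le_trans hkb (Nat.mul_le_mul_left _ hge)
      have hfacts : (n - p.1.card).choose (p.2.card - p.1.card)
          * (p.2.card - p.1.card).factorial * (n - p.2.card).factorial
          = (n - p.1.card).factorial := by
        have h0 := Nat.choose_mul_factorial_mul_factorial
          (show p.2.card - p.1.card ≤ n - p.1.card by omega)
        rwa [show n - p.1.card - (p.2.card - p.1.card) = n - p.2.card by omega] at h0
      calc (n - 3) * (e p * cnt p)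
          ≤ (n - 3) * (n.choose p.1.card * cnt p) := by gcongr
        _ = ((n - 3) * n.choose p.1.card)
            * (p.1.card.factorial * (p.2.card - p.1.card).factorial
              * (n - p.2.card).factorial) := by rw [hcc]; ring
        _ ≤ (2 * C * ((n - p.1.card).choose (p.2.card - p.1.card)))
            * (p.1.card.factorial * (p.2.card - p.1.card).factorial
              * (n - p.2.card).factorial) := Nat.mul_le_mul_right _ hchain
        _ = 2 * C * (p.1.card.factorial
            * ((n - p.1.card).choose (p.2.card - p.1.card)
              * (p.2.card - p.1.card).factorial * (n - p.2.card).factorial)) := by ring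
        _ = 2 * C * (p.1.card.factorial * (n - p.1.card).factorial) := by rw [hfacts]
  -- the first coordinates form an antichain
  have sumpairs : ∑ p ∈ P, p.1.card.factorial * (n - p.1.card).factorial ≤ n.factorial := by
    have hinj : ∀ p ∈ P, ∀ q ∈ P, p.1 = q.1 → p = q := by
      rintro ⟨A, B⟩ hp ⟨A', B'⟩ hq (rfl : A = A')
      obtain ⟨hA, hB, hAB⟩ := hmemP hp
      obtain ⟨_, hB', hAB'⟩ := hmemP hq
      by_contra hne
      have hBB' : B ≠ B' := by
        intro hc; exact hne (by rw [hc])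
      exact h A hA B hB B' hB' (Finset.ssubset_iff_subset_ne.mp hAB).2
        (Finset.ssubset_iff_subset_ne.mp hAB').2 hBB' ⟨hAB, hAB'⟩
    have himg : (∑ A ∈ P.image Prod.fst, A.card.factorial * (n - A.card).factorial)
        = ∑ p ∈ P, p.1.card.factorial * (n - p.1.card).factorial :=
      Finset.sum_image hinj
    rw [← himg]
    apply lym_nat
    intro A hA A' hA' hne hsub
    simp only [Finset.coe_image, Set.mem_image, Finset.mem_coe] at hA hA'
    obtain ⟨p, hp, rfl⟩ := hA
    obtain ⟨q, hq, rfl⟩ := hA'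
    obtain ⟨hp1, hp2, hp3⟩ := hmemP hp
    obtain ⟨hq1, hq2, hq3⟩ := hmemP hq
    have h1 : p.1 ⊂ q.1 := Finset.ssubset_iff_subset_ne.mpr ⟨hsub, hne⟩
    have h2 : p.1 ⊂ q.2 := h1.trans hq3
    exact h p.1 hp1 q.1 hq1 q.2 hq2 hne
      (Finset.ssubset_iff_subset_ne.mp h2).2 (Finset.ssubset_iff_subset_ne.mp hq3).2 ⟨h1, h2⟩
  have main2 : (n - 3) * (∑ p ∈ P, e p * cnt p) ≤ 2 * C * n.factorial := by
    calc (n - 3) * (∑ p ∈ P, e p * cnt p) = ∑ p ∈ P, (n - 3) * (e p * cnt p) :=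
        Finset.mul_sum _ _ _
      _ ≤ ∑ p ∈ P, 2 * C * (p.1.card.factorial * (n - p.1.card).factorial) :=
        Finset.sum_le_sum perpair
      _ = 2 * C * ∑ p ∈ P, p.1.card.factorial * (n - p.1.card).factorial :=
        (Finset.mul_sum _ _ _).symm
      _ ≤ 2 * C * n.factorial := Nat.mul_le_mul_left _ sumpairs
  have main3 : (n - 3) * F.card ≤ (n - 3) * C + 2 * C := by
    have h3 : ((n - 3) * F.card) * n.factorial ≤ ((n - 3) * C + 2 * C) * n.factorial := by
      calc ((n - 3) * F.card) * n.factorial = (n - 3) * (F.card * n.factorial) := by ring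
        _ ≤ (n - 3) * (n.factorial * C + ∑ p ∈ P, e p * cnt p) := Nat.mul_le_mul_left _ main1
        _ = (n - 3) * C * n.factorial + (n - 3) * (∑ p ∈ P, e p * cnt p) := by ring
        _ ≤ (n - 3) * C * n.factorial + 2 * C * n.factorial := Nat.add_le_add_left main2 _
        _ = ((n - 3) * C + 2 * C) * n.factorial := by ring
    exact Nat.le_of_mul_le_mul_right h3 (Nat.factorial_pos n)
  -- pass to ℚ
  have hcast : ((n - 3 : ℕ) : ℚ) = (n : ℚ) - 3 := by
    have h3n : (3 : ℕ) ≤ n := by omega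
    push_cast [h3n]
    ring
  have h4 : ((n - 3 : ℕ) : ℚ) * (F.card : ℚ) ≤ ((n - 3 : ℕ) : ℚ) * (C : ℚ) + 2 * (C : ℚ) := by
    exact_mod_cast main3
  rw [hcast] at h4
  have hpos : (0 : ℚ) < (n : ℚ) - 3 := by
    have : (4 : ℚ) ≤ (n : ℚ) := by exact_mod_cast hn
    linarith
  rw [show (C : ℚ) * (1 + 2 / ((n : ℚ) - 3)) = (((n : ℚ) - 3) * C + 2 * C) / ((n : ℚ) - 3) by
    field_simp]
  rw [le_div_iff₀ hpos]
  linarith
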